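/- Let q, t ∈ ℂ with 0 < |q| ≤ e^{−π√3} and |q|^{1/2} ≤ |t| ≤ 1. Then the infinite products below converge, every factor of the leftmost product is positive, and ∏_{n=1}^∞ (1 − |q|^{n−1/2} − |q|^{n+1/2} − |q|^{2n}) ≤ |∏_{n=1}^∞ (1 − qⁿ t)(1 − qⁿ t^{−1})| ≤ ∏_{n=1}^∞ (1 + |q|^{n+1/2})(1 + |q|^{n−1/2}). -/

import Mathlib

open Real

private lemma key_sum (x y x₀ y₀ : ℝ) (hx0 : 0 < x) (h1 : x₀ ≤ x) (h2 : x ≤ y₀)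
    (he : x * y = x₀ * y₀) : x + y ≤ x₀ + y₀ := by
  nlinarith [mul_nonneg (sub_nonneg.2 h1) (sub_nonneg.2 h2)]

private lemma cx_mult {c : ℕ → ℂ} (hc : Summable c) (hne : ∀ n, 1 - c n ≠ 0) :
    Multipliable (fun n => 1 - c n) :=
  by simpa only [← sub_eq_add_neg] using Complex.multipliable_one_add_of_summable hc.neg

private lemma real_mult {g : ℕ → ℝ} (hg : Summable g) (hpos : ∀ n, 0 < 1 + g n) :
    Multipliable (fun n => 1 + g n) := by
  have hgc : Summable fun n => -(g n : ℂ) := ((Complex.summable_ofReal).2 hg).neg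
  have hlog := hgc.clog_one_sub
  have hlog2 : Summable fun n => Complex.log (((1 + g n : ℝ) : ℂ)) := by
    refine hlog.congr fun n => ?_
    push_cast
    ring_nf
  have hre : Summable fun n => Real.log (1 + g n) :=
    ((Complex.hasSum_re hlog2.hasSum).summable).congr fun n => Complex.log_ofReal_re _
  exact Real.multipliable_one_add_of_summable hg

private lemma uv_sum_le (p a b s : ℝ) (hp0 : 0 < p) (ha0 : 0 < a)
    (hb0 : 0 < b) (hbb : b * b = a) (hb1 : b ≤ 1) (hs0 : 0 < s) (hbs : b ≤ s) (hs1 : s ≤ 1) :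
    p * a * s + p * a * s⁻¹ ≤ p * b + p * (a * b) := by
  have he : (p * a * s) * (p * a * s⁻¹) = (p * (a * b)) * (p * b) := by
    rw [← hbb]
    field_simp
  have h1 : p * (a * b) ≤ p * a * s := by
    nlinarith [mul_nonneg (mul_nonneg hp0.le ha0.le) (sub_nonneg.2 hbs)]
  have h2 : p * a * s ≤ p * b := by
    nlinarith [mul_nonneg (mul_nonneg hp0.le ha0.le) (sub_nonneg.2 hs1),
      mul_nonneg hp0.le (mul_nonneg hb0.le (sub_nonneg.2 hb1))]
  have := key_sum (p * a * s) (p * a * s⁻¹) (p * (a * b)) (p * b)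
    (by positivity) h1 h2 he
  linarith

set_option maxHeartbeats 1000000 in
theorem tate_product_annulus_bounds
    (q t : ℂ) (hq0 : 0 < ‖q‖)
    (hq : ‖q‖ ≤ Real.exp (-(π * Real.sqrt 3)))
    (ht1 : ‖q‖ ^ ((1 : ℝ) / 2) ≤ ‖t‖)
    (ht2 : ‖t‖ ≤ 1) :
    Multipliable (fun n : ℕ => 1 - ‖q‖ ^ ((n : ℝ) + 1 / 2)
        - ‖q‖ ^ ((n : ℝ) + 3 / 2) - ‖q‖ ^ (2 * (n : ℝ) + 2)) ∧
    Multipliable (fun n : ℕ => (1 - q ^ (n + 1) * t) * (1 - q ^ (n + 1) * t⁻¹)) ∧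
    Multipliable (fun n : ℕ => (1 + ‖q‖ ^ ((n : ℝ) + 3 / 2))
        * (1 + ‖q‖ ^ ((n : ℝ) + 1 / 2))) ∧
    (∀ n : ℕ, 0 < 1 - ‖q‖ ^ ((n : ℝ) + 1 / 2)
        - ‖q‖ ^ ((n : ℝ) + 3 / 2) - ‖q‖ ^ (2 * (n : ℝ) + 2)) ∧
    (∏' n : ℕ, (1 - ‖q‖ ^ ((n : ℝ) + 1 / 2)
        - ‖q‖ ^ ((n : ℝ) + 3 / 2) - ‖q‖ ^ (2 * (n : ℝ) + 2))) ≤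
      ‖∏' n : ℕ, (1 - q ^ (n + 1) * t) * (1 - q ^ (n + 1) * t⁻¹)‖ ∧
    ‖∏' n : ℕ, (1 - q ^ (n + 1) * t) * (1 - q ^ (n + 1) * t⁻¹)‖ ≤
      ∏' n : ℕ, (1 + ‖q‖ ^ ((n : ℝ) + 3 / 2))
        * (1 + ‖q‖ ^ ((n : ℝ) + 1 / 2)) := by
  set a := ‖q‖ with ha_def
  set s := ‖t‖ with hs_def
  set b := a ^ ((1 : ℝ) / 2) with hb_def
  -- basic numeric facts
  have hb0 : 0 < b := Real.rpow_pos_of_pos hq0 _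
  have hbb : b * b = a := by
    rw [hb_def, ← Real.rpow_add hq0]
    norm_num
  have hsqrt : (1.7 : ℝ) ≤ Real.sqrt 3 := by
    nlinarith [Real.sq_sqrt (show (0:ℝ) ≤ 3 by norm_num), Real.sqrt_nonneg 3]
  have hpi : (3.14 : ℝ) ≤ π := by
    have := Real.pi_gt_d6
    linarith
  have hexp4 : (16 : ℝ) ≤ Real.exp 4 := by
    have h1 : Real.exp 4 = (Real.exp 1) ^ (4 : ℕ) := by
      rw [← Real.exp_nat_mul]
      norm_num
    have h2 := Real.exp_one_gt_d9
    have h3 : (2.7 : ℝ) ^ (4 : ℕ) ≤ (Real.exp 1) ^ (4 : ℕ) :=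
      pow_le_pow_left₀ (by norm_num) (by linarith) 4
    rw [h1]
    nlinarith [h3]
  have ha16 : a ≤ 1 / 16 := by
    have h1 : Real.exp (-(π * Real.sqrt 3)) ≤ Real.exp (-4) := by
      apply Real.exp_le_exp.2
      nlinarith
    have h2 : Real.exp (-4) ≤ 1 / 16 := by
      rw [Real.exp_neg]
      have := inv_anti₀ (show (0:ℝ) < 16 by norm_num) hexp4
      simpa using this
    linarith
  have hb4 : b ≤ 1 / 4 := by nlinarith [mul_self_nonneg (b - 1/4)]
  have ha1 : a < 1 := by linarith
  have hb1 : b < 1 := by linarith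
  have hab : a ≤ b := by nlinarith
  have hbs : b ≤ s := ht1
  have hs0 : 0 < s := lt_of_lt_of_le hb0 hbs
  have ht0 : t ≠ 0 := by
    intro h
    rw [hs_def, h, norm_zero] at hs0
    exact lt_irrefl 0 hs0
  -- rpow to pow
  have e1 : ∀ n : ℕ, a ^ ((n : ℝ) + 1 / 2) = a ^ n * b := by
    intro n
    rw [Real.rpow_add hq0, Real.rpow_natCast, hb_def]
  have e2 : ∀ n : ℕ, a ^ ((n : ℝ) + 3 / 2) = a ^ n * (a * b) := by
    intro n
    rw [Real.rpow_add hq0, Real.rpow_natCast, show (3/2 : ℝ) = 1 + 1/2 by norm_num,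
      Real.rpow_add hq0, Real.rpow_one, hb_def]
  have e3 : ∀ n : ℕ, a ^ (2 * (n : ℝ) + 2) = (a ^ n * a) ^ 2 := by
    intro n
    rw [show 2 * (n : ℝ) + 2 = ((2 * n + 2 : ℕ) : ℝ) by push_cast; ring, Real.rpow_natCast]
    ring
  simp only [e1, e2, e3]
  -- pow facts
  have hp0 : ∀ n : ℕ, (0:ℝ) < a ^ n := fun n => pow_pos hq0 n
  have hp1 : ∀ n : ℕ, a ^ n ≤ 1 := fun n => pow_le_one₀ hq0.le ha1.le
  -- positivity of lower factors
  have hposL : ∀ n : ℕ, 0 < 1 - a ^ n * b - a ^ n * (a * b) - (a ^ n * a) ^ 2 := by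
    intro n
    have h1 : a ^ n * b ≤ 1 / 4 := by
      nlinarith [mul_nonneg (sub_nonneg.2 (hp1 n)) hb0.le]
    have h2 : a ^ n * (a * b) ≤ 1 / 64 := by
      nlinarith [mul_nonneg (sub_nonneg.2 (hp1 n)) (mul_pos hq0 hb0).le,
        mul_nonneg (sub_nonneg.2 ha16) hb0.le]
    have h0 : a ^ n * a ≤ 1 / 16 := by
      nlinarith [mul_nonneg (sub_nonneg.2 (hp1 n)) hq0.le]
    have h3 : (a ^ n * a) ^ 2 ≤ 1 / 256 := by
      nlinarith [mul_nonneg (sub_nonneg.2 h0) (show (0:ℝ) ≤ a ^ n * a + 1 / 16 by positivity)]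
    linarith
  -- abs computations
  have hX : ∀ n : ℕ, ‖q ^ (n + 1) * t‖ = a ^ n * a * s := by
    intro n
    rw [norm_mul, norm_pow, ← ha_def, ← hs_def, pow_succ]
  have hY : ∀ n : ℕ, ‖q ^ (n + 1) * t⁻¹‖ = a ^ n * a * s⁻¹ := by
    intro n
    rw [norm_mul, norm_pow, norm_inv, ← ha_def, ← hs_def, pow_succ]
  have hZeq : ∀ n : ℕ, q ^ (n + 1) * t * (q ^ (n + 1) * t⁻¹) = q ^ (n + 1) * q ^ (n + 1) := by
    intro n
    rw [show q ^ (n + 1) * t * (q ^ (n + 1) * t⁻¹) = q ^ (n + 1) * q ^ (n + 1) * (t * t⁻¹) by ring,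
      mul_inv_cancel₀ ht0, mul_one]
  have hZ : ∀ n : ℕ, ‖q ^ (n + 1) * t * (q ^ (n + 1) * t⁻¹)‖ = (a ^ n * a) ^ 2 := by
    intro n
    rw [hZeq, norm_mul, norm_pow, ← ha_def, ← pow_succ]
    ring
  have hsumuv : ∀ n : ℕ, a ^ n * a * s + a ^ n * a * s⁻¹ ≤ a ^ n * b + a ^ n * (a * b) := by
    intro n
    exact uv_sum_le (a ^ n) a b s (hp0 n) hq0 hb0 hbb hb1.le hs0 hbs ht2
  -- pointwise lower bound
  have hlow : ∀ n : ℕ, 1 - a ^ n * b - a ^ n * (a * b) - (a ^ n * a) ^ 2 ≤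
      ‖(1 - q ^ (n + 1) * t) * (1 - q ^ (n + 1) * t⁻¹)‖ := by
    intro n
    set X := q ^ (n + 1) * t
    set Y := q ^ (n + 1) * t⁻¹
    have hE : (1 - X) * (1 - Y) = 1 - (X + Y - X * Y) := by ring
    have h1 : ‖(1 : ℂ)‖ - ‖X + Y - X * Y‖ ≤
        ‖(1 - X) * (1 - Y)‖ := by
      rw [hE]
      exact norm_sub_norm_le (1 : ℂ) _
    have h2 : ‖X + Y - X * Y‖ ≤
        ‖X‖ + ‖Y‖ + ‖X * Y‖ := by
      refine le_trans (norm_sub_le _ _) ?_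
      have := norm_add_le X Y
      linarith
    have h3 := hX n
    have h4 := hY n
    have h5 := hZ n
    have h6 := hsumuv n
    simp only [norm_one] at h1
    rw [h3, h4] at h2
    rw [h5] at h2
    linarith
  -- pointwise upper bound
  have hup : ∀ n : ℕ, ‖(1 - q ^ (n + 1) * t) * (1 - q ^ (n + 1) * t⁻¹)‖ ≤
      (1 + a ^ n * (a * b)) * (1 + a ^ n * b) := by
    intro n
    set X := q ^ (n + 1) * t
    set Y := q ^ (n + 1) * t⁻¹
    have h1 : ‖(1 - X) * (1 - Y)‖ ≤
        (1 + ‖X‖) * (1 + ‖Y‖) := by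
      rw [norm_mul]
      have hx1 : ‖1 - X‖ ≤ 1 + ‖X‖ := by
        have := norm_sub_le 1 X
        simpa using this
      have hy1 : ‖1 - Y‖ ≤ 1 + ‖Y‖ := by
        have := norm_sub_le 1 Y
        simpa using this
      exact mul_le_mul hx1 hy1 (norm_nonneg _) (by positivity)
    have h3 := hX n
    have h4 := hY n
    rw [h3, h4] at h1
    have hXY : (a ^ n * a * s) * (a ^ n * a * s⁻¹) = (a ^ n * a) ^ 2 := by
      field_simp
    have h6 := hsumuv n
    have hfin : (1 + a ^ n * a * s) * (1 + a ^ n * a * s⁻¹) ≤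
        (1 + a ^ n * (a * b)) * (1 + a ^ n * b) := by
      have hprod : (a ^ n * (a * b)) * (a ^ n * b) = (a ^ n * a) ^ 2 := by
        linear_combination (a ^ n * a ^ n * a) * hbb
      nlinarith [hXY, hprod, h6]
    exact le_trans h1 hfin
  -- summability
  have hgeo : Summable (fun n : ℕ => a ^ n) := summable_geometric_of_lt_one hq0.le ha1
  have hgeo2 : Summable (fun n : ℕ => (a ^ n * a) ^ 2) := by
    refine ((summable_geometric_of_lt_one (by positivity)
      (show a ^ 2 < 1 by nlinarith)).mul_right (a ^ 2)).congr fun n => ?_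
    rw [← pow_mul]
    ring
  -- multipliability of the lower product
  have hmL : Multipliable (fun n : ℕ => 1 - a ^ n * b - a ^ n * (a * b) - (a ^ n * a) ^ 2) := by
    have hg : Summable (fun n : ℕ => -(a ^ n * b) + (-(a ^ n * (a * b)) + -((a ^ n * a) ^ 2))) :=
      ((hgeo.mul_right b).neg).add (((hgeo.mul_right (a * b)).neg).add hgeo2.neg)
    have key : (fun n : ℕ => 1 - a ^ n * b - a ^ n * (a * b) - (a ^ n * a) ^ 2) =
        (fun n : ℕ => 1 + (-(a ^ n * b) + (-(a ^ n * (a * b)) + -((a ^ n * a) ^ 2)))) := by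
      funext n
      ring
    rw [key]
    refine real_mult hg fun n => ?_
    have := hposL n
    linarith
  -- multipliability of the upper product
  have hmU : Multipliable (fun n : ℕ => (1 + a ^ n * (a * b)) * (1 + a ^ n * b)) := by
    refine Multipliable.mul ?_ ?_
    · exact real_mult (hgeo.mul_right (a * b)) fun n => by positivity
    · exact real_mult (hgeo.mul_right b) fun n => by positivity
  -- multipliability of the complex product
  have hqgeo : Summable (fun n : ℕ => (q : ℂ) ^ n) := by
    refine summable_geometric_of_norm_lt_one ?_
    exact ha1
  have hc1 : Summable (fun n : ℕ => q ^ (n + 1) * t) := by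
    refine (hqgeo.mul_right (q * t)).congr fun n => ?_
    rw [pow_succ]
    ring
  have hc2 : Summable (fun n : ℕ => q ^ (n + 1) * t⁻¹) := by
    refine (hqgeo.mul_right (q * t⁻¹)).congr fun n => ?_
    rw [pow_succ]
    ring
  have hne1 : ∀ n : ℕ, 1 - q ^ (n + 1) * t ≠ 0 := by
    intro n h
    rw [sub_eq_zero] at h
    have h2 : ‖q ^ (n + 1) * t‖ = 1 := by rw [← h, norm_one]
    rw [hX n] at h2
    nlinarith [mul_nonneg (mul_nonneg (hp0 n).le hq0.le) (sub_nonneg.2 ht2),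
      mul_nonneg (sub_nonneg.2 (hp1 n)) hq0.le]
  have hne2 : ∀ n : ℕ, 1 - q ^ (n + 1) * t⁻¹ ≠ 0 := by
    intro n h
    rw [sub_eq_zero] at h
    have h2 : ‖q ^ (n + 1) * t⁻¹‖ = 1 := by rw [← h, norm_one]
    rw [hY n] at h2
    have hsi : s⁻¹ ≤ b⁻¹ := by
      apply inv_anti₀ hb0 hbs
    have : a ^ n * a * s⁻¹ ≤ a ^ n * a * b⁻¹ := by
      apply mul_le_mul_of_nonneg_left hsi (by positivity)
    have hinv : a * b⁻¹ = b := by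
      field_simp
      linarith [hbb]
    nlinarith [hp0 n, hp1 n, hb0, hb1]
  have hmF : Multipliable (fun n : ℕ => (1 - q ^ (n + 1) * t) * (1 - q ^ (n + 1) * t⁻¹)) :=
    Multipliable.mul (cx_mult hc1 hne1) (cx_mult hc2 hne2)
  -- assemble
  refine ⟨hmL, hmF, hmU, hposL, ?_, ?_⟩
  · have hPabs := hmF.hasProd.norm
    exact le_of_tendsto_of_tendsto' hmL.hasProd hPabs fun u =>
      Finset.prod_le_prod (fun i _ => (hposL i).le) (fun i _ => hlow i)
  · have hPabs := hmF.hasProd.norm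
    exact le_of_tendsto_of_tendsto' hPabs hmU.hasProd fun u =>
      Finset.prod_le_prod (fun i _ => norm_nonneg _) (fun i _ => hup i)
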